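/- arXiv:1901.07445 — 3 statements merged into one kernel-verified Lean document; each statement's English description precedes it below -/
import Mathlib

section
/- Let $0 < \mu < L$, set $\alpha = 4/(\sqrt{\mu}+\sqrt{L})^2$ and $\beta = ((\sqrt{L/\mu}-1)/(\sqrt{L/\mu}+1))^2$. For any $\lambda$ with $\mu < \lambda < L$, the discriminant $(1+\beta-\alpha\lambda)^2 - 4\beta$ is strictly negative, so the matrix $T = \begin{pmatrix} 1+\beta-\alpha\lambda & -\beta \\ 1 & 0\end{pmatrix}$ has two complex conjugate (non-real) eigenvalues, each of modulus exactly $\sqrt{\beta} = (\sqrt{L}-\sqrt{\mu})/(\sqrt{L}+\sqrt{\mu})$. -/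
set_option maxHeartbeats 1000000 in
/-- With the Polyak heavy-ball parameters `α = 4/(√μ+√L)²`,
`β = ((√(L/μ)-1)/(√(L/μ)+1))²` and `μ < λ < L`, the discriminant
`(1+β-αλ)² - 4β` is negative, `√β = (√L-√μ)/(√L+√μ)`, and every (complex)
eigenvalue of `T = [[1+β-αλ, -β],[1,0]]`, i.e. every root of
`x² - (1+β-αλ)x + β`, is non-real with modulus `√β`. -/
theorem stmt2 (μ L α β lam : ℝ) (hμ : 0 < μ) (hL : μ < L)
    (hα : α = 4 / (Real.sqrt μ + Real.sqrt L) ^ 2)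
    (hβ : β = ((Real.sqrt (L / μ) - 1) / (Real.sqrt (L / μ) + 1)) ^ 2)
    (h1 : μ < lam) (h2 : lam < L) :
    (1 + β - α * lam) ^ 2 - 4 * β < 0 ∧
    Real.sqrt β = (Real.sqrt L - Real.sqrt μ) / (Real.sqrt L + Real.sqrt μ) ∧
    ∀ z : ℂ, z ^ 2 - ((1 + β - α * lam : ℝ) : ℂ) * z + ((β : ℝ) : ℂ) = 0 →
      z.im ≠ 0 ∧ ‖z‖ = Real.sqrt β := by
  have hL0 : 0 < L := hμ.trans hL
  set s := Real.sqrt μ with hsdef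
  set t := Real.sqrt L with htdef
  have hs : 0 < s := Real.sqrt_pos.2 hμ
  have ht : 0 < t := Real.sqrt_pos.2 hL0
  have hst : s < t := Real.sqrt_lt_sqrt hμ.le hL
  have hs2 : s ^ 2 = μ := Real.sq_sqrt hμ.le
  have ht2 : t ^ 2 = L := Real.sq_sqrt hL0.le
  have hsq : Real.sqrt (L / μ) = t / s := Real.sqrt_div' L hμ.le ▸ (by
    rw [Real.sqrt_div hL0.le])
  clear_value s t
  have hts : (0:ℝ) < t + s := by linarith
  have hβ' : β = ((t - s) / (t + s)) ^ 2 := by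
    rw [hβ, hsq]
    congr 1
    field_simp
  set q : ℝ := (t - s) / (t + s) with hqdef
  clear_value q
  have hq : 0 < q := by rw [hqdef]; exact div_pos (by linarith) hts
  have hα0 : 0 < α := by rw [hα]; positivity
  -- identities
  have hid1 : 1 + β - α * μ = 2 * q := by
    rw [hβ', hα, ← hs2, hqdef]
    field_simp
    ring
  have hid2 : 1 + β - α * L = -(2 * q) := by
    rw [hβ', hα, ← ht2, hqdef]
    field_simp
    ring
  have hlt1 : α * μ < α * lam := by nlinarith
  have hlt2 : α * lam < α * L := by nlinarith
  have hdisc : (1 + β - α * lam) ^ 2 - 4 * β < 0 := by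
    have hb1 : 1 + β - α * lam < 2 * q := by linarith
    have hb2 : -(2 * q) < 1 + β - α * lam := by linarith
    nlinarith [sq_lt_sq' hb2 hb1, hβ', sq_nonneg q]
  have hsqrtβ : Real.sqrt β = q := by
    rw [hβ']
    exact Real.sqrt_sq hq.le
  have goal2 : Real.sqrt β = (t - s) / (t + s) := by rw [hsqrtβ, hqdef]
  refine ⟨hdisc, hsqrtβ, ?_⟩
  intro z hz
  set b : ℝ := 1 + β - α * lam with hbdef
  have hw : (z - (b : ℂ) / 2) ^ 2 = (((b ^ 2 - 4 * β) / 4 : ℝ) : ℂ) := by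
    push_cast
    linear_combination hz
  set w : ℂ := z - (b : ℂ) / 2 with hwdef
  clear_value b w
  have hwim : w.re * w.im + w.im * w.re = 0 := by
    have := congrArg Complex.im hw
    simpa [pow_two, Complex.mul_im] using this
  have hwre : w.re * w.re - w.im * w.im = (b ^ 2 - 4 * β) / 4 := by
    have := congrArg Complex.re hw
    simpa [pow_two, Complex.mul_re] using this
  have him : w.im ≠ 0 := by
    intro h
    rw [h] at hwre
    simp at hwre
    nlinarith [mul_self_nonneg w.re, hwre, hdisc]
  have hre : w.re = 0 := by
    rcases mul_eq_zero.1 (by linarith [hwim] : w.re * w.im = 0) with h | h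
    · exact h
    · exact absurd h him
  have hzim : z.im = w.im := by
    rw [hwdef]
    simp
  have hzre : z.re = b / 2 := by
    have : w.re = z.re - b / 2 := by rw [hwdef]; simp
    rw [this] at hre; linarith
  refine ⟨by rw [hzim]; exact him, ?_⟩
  rw [Complex.norm_def, hβ']
  congr 1
  rw [Complex.normSq_apply, hzre, hzim]
  rw [hre] at hwre
  have hb2 : w.im * w.im = (4 * β - b ^ 2) / 4 := by linarith
  rw [hb2, ← hβ']
  ring
end

section
/- Let $\kappa > 1$, $L = \kappa\mu$ with $\mu > 0$, $\alpha = 4/(3L+\mu)$, and $\beta = (\sqrt{3\kappa+1}-2)/(\sqrt{3\kappa+1}+2)$ (assume $3\kappa+1 > 4$). For $\lambda \in [\mu, L]$ define $\Delta(\lambda) = (1+\beta)^2(1-\alpha\lambda)^2 - 4\beta(1-\alpha\lambda)$. Then $\Delta(\lambda) = \frac{16(1-\alpha\lambda)}{(\sqrt{3\kappa+1}+2)^2}\left(1 - \frac{\lambda}{\mu}\right)$; in particular $\Delta(\lambda) = 0$ iff $\lambda = \mu$ or $\lambda = (3L+\mu)/4$, $\Delta(\lambda) < 0$ for $\mu <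 \lambda < (3L+\mu)/4$, and $\Delta(\lambda) > 0$ for $(3L+\mu)/4 < \lambda \leq L$. -/
/-- Discriminant analysis for Nesterov's AG with the fast parameters
`α = 4/(3L+μ)`, `β = (√(3κ+1)-2)/(√(3κ+1)+2)`, `L = κμ`, `κ > 1`:
for `λ ∈ [μ, L]`, `Δ(λ) = (1+β)²(1-αλ)² - 4β(1-αλ)` equals
`16(1-αλ)/(√(3κ+1)+2)² · (1 - λ/μ)`; it vanishes iff `λ = μ` or
`λ = (3L+μ)/4`, is negative for `μ < λ < (3L+μ)/4`, and positive for
`(3L+μ)/4 < λ ≤ L`. -/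
theorem stmt8 (κ μ L α β : ℝ) (hκ : 1 < κ) (hμ : 0 < μ) (hL : L = κ * μ)
    (hα : α = 4 / (3 * L + μ))
    (hβ : β = (Real.sqrt (3 * κ + 1) - 2) / (Real.sqrt (3 * κ + 1) + 2)) :
    ∀ lam : ℝ, μ ≤ lam → lam ≤ L →
      ((1 + β) ^ 2 * (1 - α * lam) ^ 2 - 4 * β * (1 - α * lam) =
        16 * (1 - α * lam) / (Real.sqrt (3 * κ + 1) + 2) ^ 2 * (1 - lam / μ)) ∧
      (((1 + β) ^ 2 * (1 - α * lam) ^ 2 - 4 * β * (1 - α * lam) = 0) ↔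
        (lam = μ ∨ lam = (3 * L + μ) / 4)) ∧
      (μ < lam → lam < (3 * L + μ) / 4 →
        (1 + β) ^ 2 * (1 - α * lam) ^ 2 - 4 * β * (1 - α * lam) < 0) ∧
      ((3 * L + μ) / 4 < lam →
        0 < (1 + β) ^ 2 * (1 - α * lam) ^ 2 - 4 * β * (1 - α * lam)) := by
  intro lam h1 h2
  set s := Real.sqrt (3 * κ + 1) with hsdef
  have h0 : (0:ℝ) ≤ 3 * κ + 1 := by nlinarith
  have hs2 : s ^ 2 = 3 * κ + 1 := Real.sq_sqrt h0
  have hsgt : 2 < s := by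
    have : (2:ℝ) < Real.sqrt (3 * κ + 1) := by
      rw [show (2:ℝ) = Real.sqrt 4 by
        rw [show (4:ℝ) = 2^2 by norm_num, Real.sqrt_sq (by norm_num)]]
      exact Real.sqrt_lt_sqrt (by norm_num) (by nlinarith)
    exact this
  have hspos : 0 < s + 2 := by linarith
  have hsne : s + 2 ≠ 0 := ne_of_gt hspos
  have hμne : μ ≠ 0 := ne_of_gt hμ
  have hden : 3 * L + μ = s ^ 2 * μ := by rw [hs2]; rw [hL]; ring
  have hdpos : 0 < 3 * L + μ := by nlinarith
  have hdne : 3 * L + μ ≠ 0 := ne_of_gt hdpos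
  have hμL : μ < L := by nlinarith
  have hsne0 : s ≠ 0 := by positivity
  -- key identity
  have hkey : (1 + β) ^ 2 * (1 - α * lam) ^ 2 - 4 * β * (1 - α * lam) =
      16 * (1 - α * lam) / (s + 2) ^ 2 * (1 - lam / μ) := by
    have hα' : α = 4 / (s ^ 2 * μ) := by rw [hα, hden]
    rw [hα', hβ]
    field_simp
    ring
  -- expression for 1 - α lam
  have ht : 1 - α * lam = (3 * L + μ - 4 * lam) / (3 * L + μ) := by
    rw [hα]; field_simp
  have hm : 1 - lam / μ = (μ - lam) / μ := by field_simp
  refine ⟨hkey, ?_, ?_, ?_⟩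
  · rw [hkey]
    constructor
    · intro h
      rcases mul_eq_zero.mp h with h | h
      · right
        have : 1 - α * lam = 0 := by
          have h16 : (16:ℝ) / (s + 2) ^ 2 ≠ 0 := by positivity
          have := h
          rw [show 16 * (1 - α * lam) / (s + 2) ^ 2
                = (16 / (s + 2) ^ 2) * (1 - α * lam) by ring] at this
          exact (mul_eq_zero.mp this).resolve_left h16
        rw [ht] at this
        have h4 : 3 * L + μ - 4 * lam = 0 := by
          field_simp at this; linarith
        linarith
      · left
        rw [hm] at h
        have : μ - lam = 0 := by field_simp at h; linarith
        linarith
    · rintro (rfl | rfl)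
      · rw [hm]; simp
      · rw [ht, show 3 * L + μ - 4 * ((3 * L + μ) / 4) = 0 by ring]
        simp
  · intro hg hl
    rw [hkey]
    have htpos : 0 < 1 - α * lam := by
      rw [ht]; apply div_pos (by linarith) hdpos
    have hmneg : 1 - lam / μ < 0 := by
      rw [hm]; apply div_neg_of_neg_of_pos (by linarith) hμ
    have : 0 < 16 * (1 - α * lam) / (s + 2) ^ 2 := by positivity
    exact mul_neg_of_pos_of_neg this hmneg
  · intro hg
    rw [hkey]
    have htneg : 1 - α * lam < 0 := by
      rw [ht]; apply div_neg_of_neg_of_pos (by linarith) hdpos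
    have hgμ : μ < lam := by
      have : 4 * μ < 3 * L + μ := by linarith
      linarith
    have hmneg : 1 - lam / μ < 0 := by
      rw [hm]; apply div_neg_of_neg_of_pos (by linarith) hμ
    have hfneg : 16 * (1 - α * lam) / (s + 2) ^ 2 < 0 := by
      apply div_neg_of_neg_of_pos (by linarith) (by positivity)
    exact mul_pos_of_neg_of_neg hfneg hmneg
end

section
/- Let $\kappa > 1$, $\mu > 0$, $L = \kappa\mu$, $\alpha = 4/(3L+\mu)$, $\beta = (\sqrt{3\kappa+1}-2)/(\sqrt{3\kappa+1}+2)$, and $\lambda \in (\mu, (3L+\mu)/4)$. Then the two complex conjugate eigenvalues of $T = \begin{pmatrix}(1+\beta)(1-\alpha\lambda) & -\beta(1-\alpha\lambda)\\ 1 & 0\end{pmatrix}$ each have modulus $\sqrt{\beta(1-\alpha\lambda)} \leq 1 - \frac{2}{\sqrt{3\kappa+1}}$. -/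
lemma quad_root_abs (b c : ℝ) (hc : 0 < c) (hD : b ^ 2 < 4 * c) (z : ℂ)
    (hz : z ^ 2 - (b : ℂ) * z + (c : ℂ) = 0) : ‖z‖ = Real.sqrt c := by
  set w : ℂ := z - (b / 2 : ℝ) with hw
  have hw2 : w ^ 2 = ((b ^ 2 / 4 - c : ℝ) : ℂ) := by
    have : w ^ 2 - ((b ^ 2 / 4 - c : ℝ) : ℂ) = z ^ 2 - (b : ℂ) * z + (c : ℂ) := by
      push_cast [hw]; ring
    linear_combination this + hz
  have hre : w.re * w.re - w.im * w.im = b ^ 2 / 4 - c := by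
    have := congrArg Complex.re hw2
    simpa [pow_two, Complex.mul_re] using this
  have him : w.re * w.im + w.im * w.re = 0 := by
    have := congrArg Complex.im hw2
    simpa [pow_two, Complex.mul_im] using this
  have hneg : b ^ 2 / 4 - c < 0 := by linarith
  have hre0 : w.re = 0 := by
    by_contra h
    have him0 : w.im = 0 := by
      have : w.re * w.im = 0 := by linarith
      rcases mul_eq_zero.mp this with h' | h'
      · exact absurd h' h
      · exact h'
    nlinarith [sq_nonneg w.re]
  have him2 : w.im * w.im = c - b ^ 2 / 4 := by
    rw [hre0] at hre; linarith
  have hzre : z.re = b / 2 := by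
    have := congrArg Complex.re hw
    simp at this
    linarith
  have hzim : z.im = w.im := by
    have := congrArg Complex.im hw
    simp at this
    linarith
  rw [Complex.norm_def, Complex.normSq_apply, hzre, hzim]
  congr 1
  rw [him2]; ring

/-- For Nesterov's AG with the fast parameters and `λ ∈ (μ, (3L+μ)/4)`, every
(complex) eigenvalue of `T = [[(1+β)(1-αλ), -β(1-αλ)],[1,0]]`, i.e. every root
of `x² - (1+β)(1-αλ)x + β(1-αλ) = 0`, has modulus `√(β(1-αλ))`, which is at
most `1 - 2/√(3κ+1)`. -/
theorem stmt9 (κ μ L α β lam : ℝ) (hκ : 1 < κ) (hμ : 0 < μ) (hL : L = κ * μ)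
    (hα : α = 4 / (3 * L + μ))
    (hβ : β = (Real.sqrt (3 * κ + 1) - 2) / (Real.sqrt (3 * κ + 1) + 2))
    (h1 : μ < lam) (h2 : lam < (3 * L + μ) / 4) :
    (∀ z : ℂ, z ^ 2 - (((1 + β) * (1 - α * lam) : ℝ) : ℂ) * z +
        ((β * (1 - α * lam) : ℝ) : ℂ) = 0 →
      ‖z‖ = Real.sqrt (β * (1 - α * lam))) ∧
    Real.sqrt (β * (1 - α * lam)) ≤ 1 - 2 / Real.sqrt (3 * κ + 1) := by
  set s := Real.sqrt (3 * κ + 1) with hs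
  have hs2 : s ^ 2 = 3 * κ + 1 := Real.sq_sqrt (by linarith)
  have hsgt : 2 < s := by nlinarith [Real.sqrt_nonneg (3 * κ + 1)]
  have hspos : 0 < s := by linarith
  have hden : 0 < 3 * L + μ := by rw [hL]; nlinarith
  have hαpos : 0 < α := by rw [hα]; positivity
  have hαμ : α * μ = 4 / s ^ 2 := by
    rw [hα, hL, hs2]; field_simp
  have hαlam1 : α * lam < 1 := by
    rw [hα]; rw [div_mul_eq_mul_div, div_lt_one hden]; linarith
  have hαlam0 : 4 / s ^ 2 < α * lam := by
    rw [← hαμ]; exact (mul_lt_mul_iff_right₀ hαpos).mpr h1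
  have hβpos : 0 < β := by rw [hβ]; apply div_pos <;> linarith
  have hβlt : β < 1 := by
    rw [hβ, div_lt_one (by linarith)]; linarith
  have hcpos : 0 < β * (1 - α * lam) := by
    apply mul_pos hβpos; linarith
  have hkey : β * (1 - α * lam) < (1 - 2 / s) ^ 2 := by
    have h1a : 1 - α * lam < 1 - 4 / s ^ 2 := by linarith
    have hb : β = (s - 2) / (s + 2) := by rw [hβ]
    have : β * (1 - α * lam) < (s - 2) / (s + 2) * ((s ^ 2 - 4) / s ^ 2) := by
      rw [hb]
      apply mul_lt_mul_of_pos_left _ (by apply div_pos <;> linarith)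
      have : 1 - 4 / s ^ 2 = (s ^ 2 - 4) / s ^ 2 := by field_simp
      linarith [this ▸ h1a]
    have heq : (s - 2) / (s + 2) * ((s ^ 2 - 4) / s ^ 2) = (1 - 2 / s) ^ 2 := by
      field_simp; ring
    linarith [heq ▸ this]
  constructor
  · intro z hz
    apply quad_root_abs _ _ hcpos _ z hz
    -- discriminant: ((1+β)(1-αλ))² < 4β(1-αλ)
    have h1a : 1 - α * lam < (s ^ 2 - 4) / s ^ 2 := by
      have : 1 - 4 / s ^ 2 = (s ^ 2 - 4) / s ^ 2 := by field_simp
      linarith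
    have hb : β = (s - 2) / (s + 2) := by rw [hβ]
    have h1b : (1 + β) ^ 2 * (1 - α * lam) < 4 * β := by
      rw [hb]
      have h1p : (1 + (s - 2) / (s + 2)) ^ 2 = 4 * s ^ 2 / (s + 2) ^ 2 := by
        field_simp; ring
      rw [h1p]
      have hpos : (0:ℝ) < 4 * s ^ 2 / (s + 2) ^ 2 := by positivity
      calc 4 * s ^ 2 / (s + 2) ^ 2 * (1 - α * lam)
          < 4 * s ^ 2 / (s + 2) ^ 2 * ((s ^ 2 - 4) / s ^ 2) :=
            (mul_lt_mul_iff_right₀ hpos).mpr h1a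
        _ = 4 * ((s - 2) / (s + 2)) := by field_simp; ring
    nlinarith [sq_nonneg (1 - α * lam), hcpos]
  · have h2s : 0 ≤ 1 - 2 / s := by
      have : 2 / s < 1 := by rw [div_lt_one hspos]; linarith
      linarith
    calc Real.sqrt (β * (1 - α * lam)) ≤ Real.sqrt ((1 - 2 / s) ^ 2) :=
          Real.sqrt_le_sqrt (le_of_lt hkey)
      _ = 1 - 2 / s := Real.sqrt_sq h2s
end
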